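/- Every matrix in GL₃(ℤ) can be written as a product A₁A₂A₃ where A₁ has third row (0,0,1), A₂ has the form ((G,0,H),(0,1,0),(I,0,J)), and A₃ has the block form ((K,L,0),(M,N,0),(0,0,1)), with all Aᵢ ∈ GL₃(ℤ). -/

import Mathlib

theorem stmt14 (A : GL (Fin 3) ℤ) :
    ∃ A₁ A₂ A₃ : GL (Fin 3) ℤ, A = A₁ * A₂ * A₃ ∧
      ((A₁ : Matrix (Fin 3) (Fin 3) ℤ) 2 0 = 0 ∧ (A₁ : Matrix (Fin 3) (Fin 3) ℤ) 2 1 = 0 ∧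
        (A₁ : Matrix (Fin 3) (Fin 3) ℤ) 2 2 = 1) ∧
      ((A₂ : Matrix (Fin 3) (Fin 3) ℤ) 0 1 = 0 ∧ (A₂ : Matrix (Fin 3) (Fin 3) ℤ) 1 0 = 0 ∧
        (A₂ : Matrix (Fin 3) (Fin 3) ℤ) 1 1 = 1 ∧ (A₂ : Matrix (Fin 3) (Fin 3) ℤ) 1 2 = 0 ∧
        (A₂ : Matrix (Fin 3) (Fin 3) ℤ) 2 1 = 0) ∧
      ((A₃ : Matrix (Fin 3) (Fin 3) ℤ) 0 2 = 0 ∧ (A₃ : Matrix (Fin 3) (Fin 3) ℤ) 1 2 = 0 ∧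
        (A₃ : Matrix (Fin 3) (Fin 3) ℤ) 2 0 = 0 ∧ (A₃ : Matrix (Fin 3) (Fin 3) ℤ) 2 1 = 0 ∧
        (A₃ : Matrix (Fin 3) (Fin 3) ℤ) 2 2 = 1) := by
  set M : Matrix (Fin 3) (Fin 3) ℤ := (A : Matrix (Fin 3) (Fin 3) ℤ) with hM
  set a : ℤ := M 2 0
  set b : ℤ := M 2 1
  set c : ℤ := M 2 2
  set g : ℕ := Int.gcd a b with hg
  -- the bottom row is unimodular
  have hd1 : Int.gcd (g : ℤ) c = 1 := by
    have ha : ((Int.gcd (g : ℤ) c : ℤ)) ∣ a :=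
      dvd_trans (dvd_trans ((Int.gcd_dvd_left _ _)) (by exact_mod_cast (Int.gcd_dvd_left _ _))) dvd_rfl
    have hb : ((Int.gcd (g : ℤ) c : ℤ)) ∣ b :=
      dvd_trans (dvd_trans ((Int.gcd_dvd_left _ _)) (by exact_mod_cast (Int.gcd_dvd_right _ _))) dvd_rfl
    have hc : ((Int.gcd (g : ℤ) c : ℤ)) ∣ c := (Int.gcd_dvd_right _ _)
    have hdvd : ((Int.gcd (g : ℤ) c : ℤ)) ∣ M.det := by
      rw [Matrix.det_fin_three]
      exact dvd_sub (dvd_add (dvd_add (dvd_sub (dvd_sub (hc.mul_left _) (hb.mul_left _))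
        (hc.mul_left _)) (ha.mul_left _)) (hb.mul_left _)) (ha.mul_left _)
    have hu : IsUnit M.det := by
      have : IsUnit M := A.isUnit
      exact (Matrix.isUnit_iff_isUnit_det M).mp this
    have hone : ((Int.gcd (g : ℤ) c : ℤ)) ∣ 1 := by
      rcases Int.isUnit_iff.mp hu with h | h
      · rw [h] at hdvd; exact hdvd
      · rw [h] at hdvd; exact dvd_neg.mp hdvd
    exact_mod_cast Nat.dvd_one.mp (by exact_mod_cast hone)
  set u : ℤ := Int.gcdA (g : ℤ) c
  set v : ℤ := Int.gcdB (g : ℤ) c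
  have h3 : (g : ℤ) * u + c * v = 1 := by
    have := Int.gcd_eq_gcd_ab (g : ℤ) c
    rw [hd1] at this
    exact_mod_cast this.symm
  obtain ⟨x, y, a', b', hax, hbx, hbez, hdet⟩ :
      ∃ x y a' b' : ℤ, a = (g : ℤ) * a' ∧ b = (g : ℤ) * b' ∧
        a * x + b * y = (g : ℤ) ∧ x * a' + y * b' = 1 := by
    by_cases hg0 : (g : ℤ) = 0
    · have hgz : g = 0 := by exact_mod_cast hg0
      obtain ⟨ha0, hb0⟩ := Int.gcd_eq_zero_iff.mp hgz
      exact ⟨1, 0, 1, 0, by simp [ha0, hg0], by simp [hb0, hg0],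
        by simp [ha0, hb0, hg0], by ring⟩
    · refine ⟨Int.gcdA a b, Int.gcdB a b, a / (g : ℤ), b / (g : ℤ), ?_, ?_, ?_, ?_⟩
      · exact (Int.mul_ediv_cancel' (Int.gcd_dvd_left _ _)).symm
      · exact (Int.mul_ediv_cancel' (Int.gcd_dvd_right _ _)).symm
      · exact (Int.gcd_eq_gcd_ab a b).symm
      · have hax : a = (g : ℤ) * (a / (g : ℤ)) := (Int.mul_ediv_cancel' (Int.gcd_dvd_left _ _)).symm
        have hbx : b = (g : ℤ) * (b / (g : ℤ)) := (Int.mul_ediv_cancel' (Int.gcd_dvd_right _ _)).symm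
        have hbez : a * Int.gcdA a b + b * Int.gcdB a b = (g : ℤ) :=
          (Int.gcd_eq_gcd_ab a b).symm
        apply mul_left_cancel₀ hg0
        linear_combination hbez - Int.gcdA a b * hax - Int.gcdB a b * hbx
  -- the two elementary units
  set B3 : Matrix (Fin 3) (Fin 3) ℤ := !![x, -b', 0; y, a', 0; 0, 0, 1] with hB3
  set B3i : Matrix (Fin 3) (Fin 3) ℤ := !![a', b', 0; -y, x, 0; 0, 0, 1] with hB3i
  set B2 : Matrix (Fin 3) (Fin 3) ℤ := !![-c, 0, u; 0, 1, 0; (g : ℤ), 0, v] with hB2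
  set B2i : Matrix (Fin 3) (Fin 3) ℤ := !![-v, 0, u; 0, 1, 0; (g : ℤ), 0, c] with hB2i
  have hU3a : B3 * B3i = 1 := by
    ext i j
    fin_cases i <;> fin_cases j <;>
      simp [hB3, hB3i, Matrix.mul_apply, Fin.sum_univ_three, Matrix.one_apply] <;>
      first | ring1 | linear_combination hdet | linear_combination -hdet
  have hU3b : B3i * B3 = 1 := by
    ext i j
    fin_cases i <;> fin_cases j <;>
      simp [hB3, hB3i, Matrix.mul_apply, Fin.sum_univ_three, Matrix.one_apply] <;>
      first | ring1 | linear_combination hdet | linear_combination -hdet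
  have hU2a : B2 * B2i = 1 := by
    ext i j
    fin_cases i <;> fin_cases j <;>
      simp [hB2, hB2i, Matrix.mul_apply, Fin.sum_univ_three, Matrix.one_apply] <;>
      first | ring1 | linear_combination h3 | linear_combination -h3
  have hU2b : B2i * B2 = 1 := by
    ext i j
    fin_cases i <;> fin_cases j <;>
      simp [hB2, hB2i, Matrix.mul_apply, Fin.sum_univ_three, Matrix.one_apply] <;>
      first | ring1 | linear_combination h3 | linear_combination -h3
  set U3 : GL (Fin 3) ℤ := ⟨B3, B3i, hU3a, hU3b⟩ with hU3
  set U2 : GL (Fin 3) ℤ := ⟨B2, B2i, hU2a, hU2b⟩ with hU2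
  refine ⟨A * U3 * U2, U2⁻¹, U3⁻¹, by group, ?_, ?_, ?_⟩
  · have h20 : ((A * U3 * U2 : GL (Fin 3) ℤ) : Matrix (Fin 3) (Fin 3) ℤ) 2 0 = 0 := by
      show (M * B3 * B2) 2 0 = 0
      simp [hB3, hB2, Matrix.mul_apply, Fin.sum_univ_three]
      linear_combination (-c) * hbez
    have h21 : ((A * U3 * U2 : GL (Fin 3) ℤ) : Matrix (Fin 3) (Fin 3) ℤ) 2 1 = 0 := by
      show (M * B3 * B2) 2 1 = 0
      simp [hB3, hB2, Matrix.mul_apply, Fin.sum_univ_three]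
      linear_combination a' * hbx - b' * hax
    have h22 : ((A * U3 * U2 : GL (Fin 3) ℤ) : Matrix (Fin 3) (Fin 3) ℤ) 2 2 = 1 := by
      show (M * B3 * B2) 2 2 = 1
      simp [hB3, hB2, Matrix.mul_apply, Fin.sum_univ_three]
      linear_combination u * hbez + h3
    exact ⟨h20, h21, h22⟩
  · refine ⟨?_, ?_, ?_, ?_, ?_⟩ <;>
      · show B2i _ _ = _
        simp [hB2i]
  · refine ⟨?_, ?_, ?_, ?_, ?_⟩ <;>
      · show B3i _ _ = _
        simp [hB3i]
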